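/- Every matrix S in SL_3(ℝ) can be written as a product S = AM, where A belongs to the subgroup A1 of matrices of the form [[a,b,x],[c,d,y],[0,0,(ad−bc)^{−1}]] with ad − bc ≠ 0, and M is one of the matrices M1(c1,c2) = [[1,0,0],[0,1,0],[c1,c2,1]], M2(c1,c2) = [[−1,0,0],[0,0,1],[c1,1,c2]], or M3(c1,c2) = [[0,0,−1],[0,1,0],[1,c1,c2]] for some real c1, c2. -/

import Mathlib

open Matrix

lemma sl3_aux (t u : ℝ) (h : t * u = 1) : u ≠ 0 ∧ u⁻¹ = t :=
  ⟨right_ne_zero_of_mul_eq_one h, inv_eq_of_mul_eq_one_left h⟩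

/-- every `S ∈ SL₃(ℝ)` factors as `S = A * M` with `A` in the affine
subgroup `A₁` and `M` one of `M₁(c₁,c₂)`, `M₂(c₁,c₂)`, `M₃(c₁,c₂)`. -/
theorem sl3_decomposition_A1 (S : Matrix (Fin 3) (Fin 3) ℝ) (hS : S.det = 1) :
    ∃ a b c d x y c1 c2 : ℝ, a * d - b * c ≠ 0 ∧
      (S = !![a, b, x; c, d, y; 0, 0, (a * d - b * c)⁻¹] * !![1, 0, 0; 0, 1, 0; c1, c2, 1] ∨
       S = !![a, b, x; c, d, y; 0, 0, (a * d - b * c)⁻¹] * !![-1, 0, 0; 0, 0, 1; c1, 1, c2] ∨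
       S = !![a, b, x; c, d, y; 0, 0, (a * d - b * c)⁻¹] * !![0, 0, -1; 0, 1, 0; 1, c1, c2]) := by
  rw [Matrix.det_fin_three] at hS
  by_cases h22 : S 2 2 ≠ 0
  · -- case M1
    refine ⟨S 0 0 - S 0 2 * (S 2 0 / S 2 2), S 0 1 - S 0 2 * (S 2 1 / S 2 2),
      S 1 0 - S 1 2 * (S 2 0 / S 2 2), S 1 1 - S 1 2 * (S 2 1 / S 2 2),
      S 0 2, S 1 2, S 2 0 / S 2 2, S 2 1 / S 2 2, ?_⟩
    have key : S 2 2 * ((S 0 0 - S 0 2 * (S 2 0 / S 2 2)) * (S 1 1 - S 1 2 * (S 2 1 / S 2 2)) -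
        (S 0 1 - S 0 2 * (S 2 1 / S 2 2)) * (S 1 0 - S 1 2 * (S 2 0 / S 2 2))) = 1 := by
      field_simp
      linear_combination S 2 2 * hS
    obtain ⟨hne, hinv⟩ := sl3_aux _ _ key
    refine ⟨hne, Or.inl ?_⟩
    rw [hinv]
    ext i j
    fin_cases i <;> fin_cases j <;>
      simp [Matrix.mul_apply, Fin.sum_univ_three] <;> field_simp
  · push_neg at h22
    by_cases h21 : S 2 1 ≠ 0
    · -- case M2
      refine ⟨-S 0 0 + (S 2 0 / S 2 1) * S 0 1, -(S 2 2 / S 2 1) * S 0 1 + S 0 2,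
        -S 1 0 + (S 2 0 / S 2 1) * S 1 1, -(S 2 2 / S 2 1) * S 1 1 + S 1 2,
        S 0 1, S 1 1, S 2 0 / S 2 1, S 2 2 / S 2 1, ?_⟩
      have key : S 2 1 * ((-S 0 0 + (S 2 0 / S 2 1) * S 0 1) * (-(S 2 2 / S 2 1) * S 1 1 + S 1 2) -
          (-(S 2 2 / S 2 1) * S 0 1 + S 0 2) * (-S 1 0 + (S 2 0 / S 2 1) * S 1 1)) = 1 := by
        field_simp
        linear_combination S 2 1 * hS
      obtain ⟨hne, hinv⟩ := sl3_aux _ _ key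
      refine ⟨hne, Or.inr (Or.inl ?_)⟩
      rw [hinv]
      ext i j
      fin_cases i <;> fin_cases j <;>
        simp [Matrix.mul_apply, Fin.sum_univ_three] <;> field_simp <;> ring
    · push_neg at h21
      have h20 : S 2 0 ≠ 0 := by
        intro h20
        rw [h20, h21, h22] at hS
        norm_num at hS
      -- case M3
      refine ⟨(S 2 2 / S 2 0) * S 0 0 - S 0 2, -(S 2 1 / S 2 0) * S 0 0 + S 0 1,
        (S 2 2 / S 2 0) * S 1 0 - S 1 2, -(S 2 1 / S 2 0) * S 1 0 + S 1 1,
        S 0 0, S 1 0, S 2 1 / S 2 0, S 2 2 / S 2 0, ?_⟩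
      have key : S 2 0 * (((S 2 2 / S 2 0) * S 0 0 - S 0 2) * (-(S 2 1 / S 2 0) * S 1 0 + S 1 1) -
          (-(S 2 1 / S 2 0) * S 0 0 + S 0 1) * ((S 2 2 / S 2 0) * S 1 0 - S 1 2)) = 1 := by
        field_simp
        linear_combination S 2 0 * hS
      obtain ⟨hne, hinv⟩ := sl3_aux _ _ key
      refine ⟨hne, Or.inr (Or.inr ?_)⟩
      rw [hinv]
      ext i j
      fin_cases i <;> fin_cases j <;>
        simp [Matrix.mul_apply, Fin.sum_univ_three] <;> field_simp <;> ring
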